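/- Let k be a field and let V be a nonzero k-vector space of finite dimension m, with exterior algebra Λ = ⋀V. Let L = ⊕_{n∈ℤ} L_n be a ℤ-graded k-vector space, nonzero and finite-dimensional over k, equipped with a left Λ-module structure such that v·L_n ⊆ L_{n+1} for every v ∈ V and every n ∈ ℤ. If L is free as a Λ-module, then max{n ∈ ℤ : L_n ≠ 0} − min{n ∈ ℤ : L_n ≠ 0} ≥ m. -/

import Mathlib

open ExteriorAlgebra in
lemma aux_ιMulti_ne_zero {k V : Type*} [Field k] [AddCommGroup V] [Module k V]
    (m : ℕ) (b : Module.Basis (Fin m) k V) : ExteriorAlgebra.ιMulti k m ⇑b ≠ 0 := by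
  classical
  let f : ∀ i : ℕ, V [⋀^Fin i]→ₗ[k] k := fun i => if h : i = m then h ▸ b.det else 0
  intro heq
  have := congrArg (ExteriorAlgebra.liftAlternating f) heq
  rw [ExteriorAlgebra.liftAlternating_apply_ιMulti, map_zero] at this
  have hf : f m = b.det := by simp [f]
  rw [hf, b.det_self] at this
  exact one_ne_zero this

lemma aux_deg {k V : Type*} [Field k] [AddCommGroup V] [Module k V]
    {L : Type*} [AddCommGroup L] [Module (ExteriorAlgebra k V) L]
    [Module k L] [IsScalarTower k (ExteriorAlgebra k V) L]
    (𝒜 : ℤ → Submodule k L)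
    (hdeg : ∀ (u : V) (n : ℤ), ∀ x ∈ 𝒜 n, (ExteriorAlgebra.ι k u) • x ∈ 𝒜 (n + 1))
    (l : List V) : ∀ (n : ℤ) (x : L), x ∈ 𝒜 n →
      ((l.map (ExteriorAlgebra.ι k)).prod) • x ∈ 𝒜 (n + l.length) := by
  induction l with
  | nil => intro n x hx; simpa using hx
  | cons a l ih =>
      intro n x hx
      have h1 : ((l.map (ExteriorAlgebra.ι k)).prod) • x ∈ 𝒜 (n + l.length) := ih n x hx
      have h2 := hdeg a (n + l.length) _ h1
      rw [List.map_cons, List.prod_cons, mul_smul]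
      convert h2 using 2
      simp [List.length_cons]
      ring

/-- A nonzero graded free module over the exterior algebra of an `m`-dimensional vector space,
whose grading is raised by one by vectors, has amplitude at least `m`. -/
theorem statement14 {k V : Type*} [Field k] [AddCommGroup V] [Module k V]
    [FiniteDimensional k V] [Nontrivial V] (m : ℕ) (hm : Module.finrank k V = m)
    {L : Type*} [AddCommGroup L] [Module (ExteriorAlgebra k V) L]
    [Module k L] [IsScalarTower k (ExteriorAlgebra k V) L]
    [Nontrivial L] [FiniteDimensional k L]
    (𝒜 : ℤ → Submodule k L) (hdecomp : DirectSum.IsInternal 𝒜)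
    (hdeg : ∀ (u : V) (n : ℤ), ∀ x ∈ 𝒜 n, (ExteriorAlgebra.ι k u) • x ∈ 𝒜 (n + 1))
    (hfree : Module.Free (ExteriorAlgebra k V) L) :
    ∃ n₁ n₂ : ℤ, 𝒜 n₁ ≠ ⊥ ∧ 𝒜 n₂ ≠ ⊥ ∧ (m : ℤ) ≤ n₂ - n₁ := by
  classical
  -- a basis of V
  obtain ⟨b⟩ : Nonempty (Module.Basis (Fin m) k V) := ⟨(Module.finBasis k V).reindex (finCongr hm)⟩
  set ω : ExteriorAlgebra k V := ExteriorAlgebra.ιMulti k m ⇑b with hω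
  have hωne : ω ≠ 0 := aux_ιMulti_ne_zero m b
  -- a basis of L over the exterior algebra
  let c := hfree.chooseBasis
  have : Nonempty (Module.Free.ChooseBasisIndex (ExteriorAlgebra k V) L) := c.index_nonempty
  obtain ⟨i⟩ := this
  set x : L := c i with hx
  have hωx : ω • x ≠ 0 := by
    intro h
    have := congrArg c.repr h
    rw [map_smul, map_zero, Module.Basis.repr_self, Finsupp.smul_single'] at this
    rw [mul_one] at this
    exact hωne (by simpa using (Finsupp.single_eq_zero).mp this)
  -- decompose x
  obtain ⟨d, hd⟩ := hdecomp.surjective x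
  rw [DirectSum.coeAddMonoidHom_eq_dfinsuppSum] at hd
  have hsum : ω • x = ∑ n ∈ d.support, ω • ((d n : L)) := by
    rw [← hd, DFinsupp.sum, Finset.smul_sum]
  obtain ⟨n, _, hn⟩ : ∃ n ∈ d.support, ω • ((d n : L)) ≠ 0 := by
    by_contra hcon
    push_neg at hcon
    exact hωx (by rw [hsum, Finset.sum_eq_zero hcon])
  -- degree shift
  have hdn : (d n : L) ∈ 𝒜 n := (d n).2
  have hdnne : (d n : L) ≠ 0 := by
    intro h; rw [h, smul_zero] at hn; exact hn rfl
  have hmem : ω • ((d n : L)) ∈ 𝒜 (n + m) := by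
    have := aux_deg 𝒜 hdeg (List.ofFn ⇑b) n _ hdn
    rw [List.length_ofFn] at this
    rw [hω, ExteriorAlgebra.ιMulti_apply]
    convert this using 2
    rw [List.map_ofFn]
    rfl
  refine ⟨n, n + m, ?_, ?_, by ring_nf; omega⟩
  · exact (Submodule.ne_bot_iff _).mpr ⟨_, hdn, hdnne⟩
  · exact (Submodule.ne_bot_iff _).mpr ⟨_, hmem, hn⟩
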